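/- Let H be a real-valued function on finite probability vectors and let Ĥ be its homogeneous extension to finite sequences (a₁,…,aₙ) of nonnegative reals with s = a₁+…+aₙ > 0, defined by Ĥ(a₁,…,aₙ) = s·H(a₁/s,…,aₙ/s). Then H satisfies the grouping axiom (H(a₁p₁,…,a_kp₁, b₁p₂,…,b_lp₂, …, c₁pₙ,…,c_mpₙ) = H(p₁,…,pₙ) + p₁H(a₁,…,a_k) + … + pₙH(c₁,…,c_m) whenever each block (a₁,…,a_k), (b₁,…,b_l), …, (c₁,…,c_m) and (p₁,…,pₙ) are probability vectors) if and only if Ĥ satisfies the 2-cocycle equation: Ĥ(a₁,…,a_k, b₁,…,b_l, …, c₁,…,c_m) = Ĥ(a₁+…+a_k, b₁+…+b_l, …, c₁+…+c_m) + Ĥ(a₁,…,a_k) + Ĥ(b₁,…,b_l) + … + Ĥ(c₁,…,c_m) for all finite sequences of nonnegative reals each having positive sum. -/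

import Mathlib

open Filter Topology

/-- The homogeneous extension of a function `H` on probability vectors:
`Ĥ (a₁,…,aₙ) = s · H (a₁/s, …, aₙ/s)` where `s = a₁ + … + aₙ`. -/
noncomputable def homogeneousExtension (H : List ℝ → ℝ) : List ℝ → ℝ :=
  fun L => L.sum * H (L.map (fun x => x / L.sum))

lemma geHE_sum_map_div (l : List ℝ) (s : ℝ) :
    (l.map (fun x => x / s)).sum = l.sum / s := by
  induction l with
  | nil => simp
  | cons a t ih => simp [ih, add_div]

lemma geHE_sum_map_mul (l : List ℝ) (c : ℝ) :
    (l.map (fun x => x * c)).sum = l.sum * c := by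
  induction l with
  | nil => simp
  | cons a t ih => simp [ih, add_mul]

lemma geHE_all_zero (l : List ℝ) (h0 : ∀ x ∈ l, 0 ≤ x) (hs : l.sum = 0) :
    ∀ x ∈ l, x = 0 := by
  induction l with
  | nil => simp
  | cons a t ih =>
    have hts : 0 ≤ t.sum := List.sum_nonneg (fun x hx => h0 x (List.mem_cons_of_mem _ hx))
    have ha : 0 ≤ a := h0 a (List.mem_cons_self)
    have hsum : a + t.sum = 0 := by simpa using hs
    have ha0 : a = 0 := by linarith
    have ht0 : t.sum = 0 := by linarith
    intro x hx
    rcases List.mem_cons.mp hx with h | h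
    · exact h ▸ ha0
    · exact ih (fun y hy => h0 y (List.mem_cons_of_mem _ hy)) ht0 x h

lemma geHE_zero (H : List ℝ → ℝ) (L : List ℝ) (h : L.sum = 0) :
    homogeneousExtension H L = 0 := by
  simp [homogeneousExtension, h]

lemma geHE_of_sum_one (H : List ℝ → ℝ) (L : List ℝ) (h : L.sum = 1) :
    homogeneousExtension H L = H L := by
  simp [homogeneousExtension, h]

/-- `H` (on probability vectors) satisfies the grouping axiom if and only if
its homogeneous extension `Ĥ` satisfies the 2-cocycle equation on finite
sequences of nonnegative reals, each having positive sum. -/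
theorem grouping_iff_cocycle (H : List ℝ → ℝ) :
    (∀ (p : List ℝ) (B : List (List ℝ)), p.length = B.length →
        (∀ x ∈ p, 0 ≤ x) → p.sum = 1 →
        (∀ b ∈ B, (∀ x ∈ b, 0 ≤ x) ∧ b.sum = 1) →
        H ((List.zipWith (fun pi b => b.map (fun x => x * pi)) p B).flatten) =
          H p + (List.zipWith (fun pi b => pi * H b) p B).sum) ↔
    (∀ P : List (List ℝ), (∀ B ∈ P, (∀ x ∈ B, 0 ≤ x) ∧ 0 < B.sum) →
        homogeneousExtension H P.flatten =
          homogeneousExtension H (P.map List.sum) +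
            (P.map (homogeneousExtension H)).sum) := by
  constructor
  · -- grouping → cocycle
    intro hg P hP
    rcases eq_or_ne P [] with rfl | hne
    · simp [homogeneousExtension]
    · have hsum_eq : (P.map List.sum).sum = P.flatten.sum := List.sum_flatten.symm
      have hs : 0 < P.flatten.sum := by
        rw [← hsum_eq]
        apply List.sum_pos
        · intro x hx
          rcases List.mem_map.mp hx with ⟨b, hb, rfl⟩
          exact (hP b hb).2
        · simpa using hne
      have hp_eq : (P.map fun b => b.sum / P.flatten.sum)
          = (P.map List.sum).map (fun x => x / P.flatten.sum) := by
        rw [List.map_map]; rfl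
      have key := hg (P.map (fun b => b.sum / P.flatten.sum))
        (P.map (fun b => b.map (fun x => x / b.sum)))
        (by simp)
        (by intro x hx
            rcases List.mem_map.mp hx with ⟨b, hb, rfl⟩
            exact div_nonneg (List.sum_nonneg (hP b hb).1) hs.le)
        (by rw [hp_eq, geHE_sum_map_div, hsum_eq, div_self hs.ne'])
        (by intro b hb
            rcases List.mem_map.mp hb with ⟨c, hc, rfl⟩
            refine ⟨?_, ?_⟩
            · intro x hx
              rcases List.mem_map.mp hx with ⟨y, hy, rfl⟩
              exact div_nonneg ((hP c hc).1 y hy) (List.sum_nonneg (hP c hc).1)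
            · rw [geHE_sum_map_div, div_self (hP c hc).2.ne'])
      have hzip : List.zipWith (fun pi b => b.map (fun x => x * pi))
          (P.map (fun b => b.sum / P.flatten.sum))
          (P.map (fun b => b.map (fun x => x / b.sum)))
          = P.map (fun b => b.map (fun x => x / P.flatten.sum)) := by
        rw [List.zipWith_map, List.zipWith_self]
        apply List.map_congr_left
        intro b hb
        rw [List.map_map]
        apply List.map_congr_left
        intro x hx
        show x / b.sum * (b.sum / P.flatten.sum) = x / P.flatten.sum
        rw [div_mul_div_comm, mul_comm x b.sum, mul_div_mul_left _ _ (hP b hb).2.ne']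
      have hzip2 : List.zipWith (fun pi b => pi * H b)
          (P.map (fun b => b.sum / P.flatten.sum))
          (P.map (fun b => b.map (fun x => x / b.sum)))
          = P.map (fun b => homogeneousExtension H b / P.flatten.sum) := by
        rw [List.zipWith_map, List.zipWith_self]
        apply List.map_congr_left
        intro b hb
        show b.sum / P.flatten.sum * H (b.map fun x => x / b.sum)
            = homogeneousExtension H b / P.flatten.sum
        rw [homogeneousExtension]
        ring
      have hflat : (P.map fun b => b.map fun x => x / P.flatten.sum).flatten
          = P.flatten.map (fun x => x / P.flatten.sum) := (List.map_flatten ..).symm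
      have hsum_div : (P.map fun b => homogeneousExtension H b / P.flatten.sum).sum
          = (P.map (homogeneousExtension H)).sum / P.flatten.sum := by
        have : (P.map fun b => homogeneousExtension H b / P.flatten.sum)
            = (P.map (homogeneousExtension H)).map (fun x => x / P.flatten.sum) := by
          rw [List.map_map]; rfl
        rw [this, geHE_sum_map_div]
      rw [hzip, hzip2, hflat, hp_eq, hsum_div] at key
      have e1 : homogeneousExtension H P.flatten
          = P.flatten.sum * H (P.flatten.map fun x => x / P.flatten.sum) := rfl
      have e2 : homogeneousExtension H (P.map List.sum)
          = P.flatten.sum * H ((P.map List.sum).map fun x => x / P.flatten.sum) := by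
        simp only [homogeneousExtension, hsum_eq]
      have e3 : P.flatten.sum * ((P.map (homogeneousExtension H)).sum / P.flatten.sum)
          = (P.map (homogeneousExtension H)).sum := by
        rw [mul_comm]
        exact div_mul_cancel₀ _ hs.ne'
      rw [e1, e2, key, mul_add, e3]
  · -- cocycle → grouping
    intro hc p B hlen hp hps hB
    -- Ĥ [s] = 0 for s > 0
    have h1 : ∀ s : ℝ, 0 < s → homogeneousExtension H [s] = 0 := by
      intro s hs
      have t := hc [[s]] (by
        intro b hb
        rw [List.mem_singleton] at hb
        subst hb
        exact ⟨by intro x hx; rw [List.mem_singleton] at hx; subst hx; exact hs.le,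
          by simpa using hs⟩)
      simp at t
      linarith
    -- Ĥ [a,0] = Ĥ [0,b] for a,b > 0
    have hpair : ∀ a b : ℝ, 0 < a → 0 < b →
        homogeneousExtension H [a, 0] = homogeneousExtension H [0, b] := by
      intro a b ha hb
      have t1 := hc [[a], [0, b]] (by
        intro c hc'
        simp only [List.mem_cons, List.mem_singleton, List.not_mem_nil, or_false] at hc'
        rcases hc' with rfl | rfl
        · exact ⟨by intro x hx; rw [List.mem_singleton] at hx; subst hx; exact ha.le,
            by simpa using ha⟩
        · refine ⟨?_, by simpa using hb⟩
          intro x hx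
          simp only [List.mem_cons, List.mem_singleton, List.not_mem_nil, or_false] at hx
          rcases hx with rfl | rfl
          · exact le_refl 0
          · exact hb.le)
      have t2 := hc [[a, 0], [b]] (by
        intro c hc'
        simp only [List.mem_cons, List.mem_singleton, List.not_mem_nil, or_false] at hc'
        rcases hc' with rfl | rfl
        · refine ⟨?_, by simpa using ha⟩
          intro x hx
          simp only [List.mem_cons, List.mem_singleton, List.not_mem_nil, or_false] at hx
          rcases hx with rfl | rfl
          · exact ha.le
          · exact le_refl 0
        · exact ⟨by intro x hx; rw [List.mem_singleton] at hx; subst hx; exact hb.le,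
            by simpa using hb⟩)
      simp at t1 t2
      have e1 := h1 a ha
      have e2 := h1 b hb
      linarith
    have h10 : homogeneousExtension H [(1:ℝ), 0] = 0 := by
      have e1 := hpair 1 1 one_pos one_pos
      have e2 := hpair 2 1 two_pos one_pos
      have e3 : homogeneousExtension H [(2:ℝ), 0] = 2 * homogeneousExtension H [(1:ℝ), 0] := by
        norm_num [homogeneousExtension]
      linarith
    have h01 : homogeneousExtension H [(0:ℝ), 1] = 0 := by
      have e1 := hpair 1 1 one_pos one_pos
      linarith
    -- prefix zero
    have hpre : ∀ L : List ℝ, (∀ x ∈ L, 0 ≤ x) → 0 < L.sum →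
        homogeneousExtension H (0 :: L) = homogeneousExtension H L := by
      intro L hL hLs
      have t1 := hc [[1, 0], L] (by
        intro c hc'
        simp only [List.mem_cons, List.mem_singleton, List.not_mem_nil, or_false] at hc'
        rcases hc' with rfl | rfl
        · refine ⟨?_, by norm_num⟩
          intro x hx
          simp only [List.mem_cons, List.mem_singleton, List.not_mem_nil, or_false] at hx
          rcases hx with rfl | rfl <;> norm_num
        · exact ⟨hL, hLs⟩)
      have t2 := hc [[1], 0 :: L] (by
        intro c hc'
        simp only [List.mem_cons, List.mem_singleton, List.not_mem_nil, or_false] at hc'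
        rcases hc' with rfl | rfl
        · exact ⟨by intro x hx; rw [List.mem_singleton] at hx; subst hx; norm_num,
            by norm_num⟩
        · refine ⟨?_, by simpa using hLs⟩
          intro x hx
          rcases List.mem_cons.mp hx with rfl | hx
          · exact le_refl 0
          · exact hL x hx)
      simp at t1 t2
      have e1 := h1 1 one_pos
      linarith
    -- suffix zero
    have hsuf : ∀ L : List ℝ, (∀ x ∈ L, 0 ≤ x) → 0 < L.sum →
        homogeneousExtension H (L ++ [0]) = homogeneousExtension H L := by
      intro L hL hLs
      have t1 := hc [L, [0, 1]] (by
        intro c hc'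
        simp only [List.mem_cons, List.mem_singleton, List.not_mem_nil, or_false] at hc'
        rcases hc' with rfl | rfl
        · exact ⟨hL, hLs⟩
        · refine ⟨?_, by norm_num⟩
          intro x hx
          simp only [List.mem_cons, List.mem_singleton, List.not_mem_nil, or_false] at hx
          rcases hx with rfl | rfl <;> norm_num)
      have t2 := hc [L ++ [0], [1]] (by
        intro c hc'
        simp only [List.mem_cons, List.mem_singleton, List.not_mem_nil, or_false] at hc'
        rcases hc' with rfl | rfl
        · refine ⟨?_, by simpa using hLs⟩
          intro x hx
          rcases List.mem_append.mp hx with hx | hx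
          · exact hL x hx
          · rw [List.mem_singleton] at hx; subst hx; exact le_refl 0
        · exact ⟨by intro x hx; rw [List.mem_singleton] at hx; subst hx; norm_num,
            by norm_num⟩)
      simp at t1 t2
      have e1 := h1 1 one_pos
      linarith
    -- prefix list of zeros
    have hprez : ∀ Z L : List ℝ, (∀ x ∈ Z, x = 0) → (∀ x ∈ L, 0 ≤ x) → 0 < L.sum →
        homogeneousExtension H (Z ++ L) = homogeneousExtension H L := by
      intro Z
      induction Z with
      | nil => intro L _ _ _; simp
      | cons z t ih =>
        intro L hZ hL hLs
        have hz : z = 0 := hZ z (List.mem_cons_self)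
        subst hz
        have ht : ∀ x ∈ t, x = 0 := fun x hx => hZ x (List.mem_cons_of_mem _ hx)
        have htL : ∀ x ∈ t ++ L, 0 ≤ x := by
          intro x hx
          rcases List.mem_append.mp hx with h | h
          · exact (ht x h).ge
          · exact hL x h
        have hts : t.sum = 0 := List.sum_eq_zero ht
        have hs' : 0 < (t ++ L).sum := by
          rw [List.sum_append, hts, zero_add]; exact hLs
        calc homogeneousExtension H ((0 :: t) ++ L)
            = homogeneousExtension H (0 :: (t ++ L)) := by rw [List.cons_append]
          _ = homogeneousExtension H (t ++ L) := hpre _ htL hs'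
          _ = homogeneousExtension H L := ih L ht hL hLs
    -- suffix list of zeros
    have hsufz : ∀ Z L : List ℝ, (∀ x ∈ Z, x = 0) → (∀ x ∈ L, 0 ≤ x) → 0 < L.sum →
        homogeneousExtension H (L ++ Z) = homogeneousExtension H L := by
      intro Z
      induction Z with
      | nil => intro L _ _ _; simp
      | cons z t ih =>
        intro L hZ hL hLs
        have hz : z = 0 := hZ z (List.mem_cons_self)
        subst hz
        have ht : ∀ x ∈ t, x = 0 := fun x hx => hZ x (List.mem_cons_of_mem _ hx)
        have h1' : ∀ x ∈ L ++ [(0:ℝ)], 0 ≤ x := by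
          intro x hx
          rcases List.mem_append.mp hx with h | h
          · exact hL x h
          · rw [List.mem_singleton] at h; subst h; exact le_refl 0
        have h2' : 0 < (L ++ [(0:ℝ)]).sum := by simpa using hLs
        have hsplit : L ++ 0 :: t = (L ++ [0]) ++ t := by simp
        rw [hsplit, ih (L ++ [0]) ht h1' h2', hsuf L hL hLs]
    -- generalized cocycle (allowing zero-sum blocks)
    have hclaim : ∀ P : List (List ℝ), (∀ C ∈ P, ∀ x ∈ C, 0 ≤ x) → 0 < P.flatten.sum →
        homogeneousExtension H P.flatten =
          homogeneousExtension H (P.map List.sum) +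
            (P.map (homogeneousExtension H)).sum := by
      intro P
      induction P with
      | nil => intro _ h; simp at h
      | cons C P' ih =>
        intro hPn hPs
        have hCnn : ∀ x ∈ C, 0 ≤ x := hPn C (List.mem_cons_self)
        have hP'nn : ∀ D ∈ P', ∀ x ∈ D, 0 ≤ x := fun D hD => hPn D (List.mem_cons_of_mem _ hD)
        have hflatnn : ∀ x ∈ P'.flatten, 0 ≤ x := by
          intro x hx
          rcases List.mem_flatten.mp hx with ⟨D, hD, hxD⟩
          exact hP'nn D hD x hxD
        have hmapnn : ∀ x ∈ P'.map List.sum, 0 ≤ x := by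
          intro x hx
          rcases List.mem_map.mp hx with ⟨D, hD, rfl⟩
          exact List.sum_nonneg (hP'nn D hD)
        have hC0 : 0 ≤ C.sum := List.sum_nonneg hCnn
        have hF0 : 0 ≤ P'.flatten.sum := List.sum_nonneg hflatnn
        have hmsum : (P'.map List.sum).sum = P'.flatten.sum := List.sum_flatten.symm
        have hgoal : (C :: P').flatten = C ++ P'.flatten := rfl
        have htot : (C :: P').flatten.sum = C.sum + P'.flatten.sum := by
          rw [hgoal, List.sum_append]
        rcases hF0.lt_or_eq with hF | hF
        · rcases hC0.lt_or_eq with hC | hC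
          · -- both positive
            have t1 := hc [C, P'.flatten] (by
              intro c hc'
              simp only [List.mem_cons, List.mem_singleton, List.not_mem_nil, or_false] at hc'
              rcases hc' with rfl | rfl
              · exact ⟨hCnn, hC⟩
              · exact ⟨hflatnn, hF⟩)
            have t2 := hc [[C.sum], P'.map List.sum] (by
              intro c hc'
              simp only [List.mem_cons, List.mem_singleton, List.not_mem_nil, or_false] at hc'
              rcases hc' with rfl | rfl
              · exact ⟨by intro x hx; rw [List.mem_singleton] at hx; subst hx; exact hC.le,
                  by simpa using hC⟩
              · exact ⟨hmapnn, by rw [hmsum]; exact hF⟩)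
            have ihe := ih hP'nn hF
            simp only [List.flatten_cons, List.flatten_nil, List.append_nil, List.map_cons,
              List.map_nil, List.sum_cons, List.sum_nil, add_zero, List.singleton_append,
              List.sum_singleton] at t1 t2 ⊢
            rw [hmsum] at t2
            rw [h1 C.sum hC] at t2
            linarith
          · -- C.sum = 0
            have hCz : ∀ x ∈ C, x = 0 := geHE_all_zero C hCnn hC.symm
            have e1 : homogeneousExtension H (C ++ P'.flatten) = homogeneousExtension H P'.flatten :=
              hprez C P'.flatten hCz hflatnn hF
            have e2 : homogeneousExtension H (C.sum :: P'.map List.sum)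
                = homogeneousExtension H (P'.map List.sum) := by
              rw [← hC]
              exact hpre _ hmapnn (by rw [hmsum]; exact hF)
            have e3 : homogeneousExtension H C = 0 := geHE_zero H C hC.symm
            have ihe := ih hP'nn hF
            simp only [List.flatten_cons, List.map_cons, List.sum_cons]
            rw [e1, e2, e3, ihe]
            ring
        · -- P'.flatten.sum = 0
          have hC : 0 < C.sum := by
            rw [htot, ← hF, add_zero] at hPs
            exact hPs
          have hFz : ∀ x ∈ P'.flatten, x = 0 := geHE_all_zero _ hflatnn hF.symm
          have e1 : homogeneousExtension H (C ++ P'.flatten) = homogeneousExtension H C :=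
            hsufz P'.flatten C hFz hCnn hC
          have hzsums : ∀ x ∈ P'.map List.sum, x = 0 := by
            intro x hx
            rcases List.mem_map.mp hx with ⟨D, hD, rfl⟩
            exact List.sum_eq_zero fun y hy => hFz y (List.mem_flatten.mpr ⟨D, hD, hy⟩)
          have e2 : homogeneousExtension H (C.sum :: P'.map List.sum)
              = homogeneousExtension H [C.sum] := by
            have hsplit : C.sum :: P'.map List.sum = [C.sum] ++ P'.map List.sum := rfl
            rw [hsplit]
            exact hsufz _ _ hzsums
              (by intro x hx; rw [List.mem_singleton] at hx; subst hx; exact hC.le)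
              (by simpa using hC)
          have e3 : homogeneousExtension H [C.sum] = 0 := h1 _ hC
          have e4 : (P'.map (homogeneousExtension H)).sum = 0 := by
            apply List.sum_eq_zero
            intro y hy
            rcases List.mem_map.mp hy with ⟨D, hD, rfl⟩
            exact geHE_zero H D (List.sum_eq_zero fun x hx =>
              hFz x (List.mem_flatten.mpr ⟨D, hD, hx⟩))
          simp only [List.flatten_cons, List.map_cons, List.sum_cons]
          rw [e1, e2, e3, e4]
          ring
    -- structural facts about the zipWith list
    have hfacts : ∀ (p : List ℝ) (B : List (List ℝ)), p.length = B.length →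
        (∀ x ∈ p, 0 ≤ x) → (∀ b ∈ B, (∀ x ∈ b, 0 ≤ x) ∧ b.sum = 1) →
        (List.zipWith (fun pi b => b.map (fun x => x * pi)) p B).map List.sum = p ∧
        ((List.zipWith (fun pi b => b.map (fun x => x * pi)) p B).map
            (homogeneousExtension H)).sum
          = (List.zipWith (fun pi b => pi * H b) p B).sum ∧
        (∀ C ∈ List.zipWith (fun pi b => b.map (fun x => x * pi)) p B, ∀ x ∈ C, 0 ≤ x) := by
      intro p
      induction p with
      | nil => intro B _ _ _; simp
      | cons a t iht =>
        intro B hlen' hp' hB'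
        cases B with
        | nil => simp at hlen'
        | cons b B' =>
          have ha : 0 ≤ a := hp' a (List.mem_cons_self)
          have hbn := (hB' b (List.mem_cons_self)).1
          have hbs := (hB' b (List.mem_cons_self)).2
          have hmapsum : (b.map (fun x => x * a)).sum = a := by
            rw [geHE_sum_map_mul, hbs, one_mul]
          have hHe : homogeneousExtension H (b.map fun x => x * a) = a * H b := by
            rcases ha.eq_or_lt with h | hpos
            · rw [geHE_zero H _ (by rw [hmapsum, ← h]), ← h, zero_mul]
            · have e : homogeneousExtension H (b.map fun x => x * a)
                  = a * H (((b.map fun x => x * a)).map (fun x => x / a)) := by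
                rw [homogeneousExtension, hmapsum]
              rw [e, List.map_map]
              congr 1
              have : ((fun x => x / a) ∘ fun x => x * a) = id := by
                funext x
                simp only [Function.comp, id]
                field_simp
              rw [this, List.map_id]
          have ihres := iht B' (by simpa using hlen')
            (fun x hx => hp' x (List.mem_cons_of_mem _ hx))
            (fun c hc' => hB' c (List.mem_cons_of_mem _ hc'))
          refine ⟨?_, ?_, ?_⟩
          · simp only [List.zipWith_cons_cons, List.map_cons, ihres.1, hmapsum]
          · simp only [List.zipWith_cons_cons, List.map_cons, List.sum_cons,
              ihres.2.1, hHe]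
          · intro C hC
            rcases List.mem_cons.mp hC with rfl | hC
            · intro x hx
              rcases List.mem_map.mp hx with ⟨y, hy, rfl⟩
              exact mul_nonneg (hbn y hy) ha
            · exact ihres.2.2 C hC
    obtain ⟨f1, f2, f3⟩ := hfacts p B hlen hp hB
    have hsum1 : (List.zipWith (fun pi b => b.map (fun x => x * pi)) p B).flatten.sum = 1 := by
      rw [List.sum_flatten, f1, hps]
    have hmain := hclaim (List.zipWith (fun pi b => b.map (fun x => x * pi)) p B) f3
      (by rw [hsum1]; norm_num)
    rw [geHE_of_sum_one H _ hsum1, f1, geHE_of_sum_one H p hps, f2] at hmain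
    exact hmain
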